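/- arXiv:0707.3339 — 4 statements merged into one kernel-verified Lean document; each statement's English description precedes it below -/
import Mathlib

section
/- Let f be a real transcendental entire function such that f and f″ + f each have only finitely many non-real zeros, and let L = f′/f, T(z) = tan z, and F = (T·L − 1)/(L + T). Then for every subset X ⊆ ℂ ∖ ℝ, the number of zeros of F′ in X, counted with multiplicity, is at most the number of distinct zeros of f in X plus the number of zeros of f″ + f in X counted with multiplicity; in particular, F′ has only finitely many non-real zeros. -/
open Complex Set Filter MeasureTheory Topology
open scoped ENNReal

noncomputable section

/-- The open upper half-plane, as a subset of `ℂ`. -/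
def UHP : Set ℂ := {z : ℂ | 0 < z.im}

/-- A real entire function: entire, mapping `ℝ` into `ℝ`. -/
def RealEntire (f : ℂ → ℂ) : Prop :=
  Differentiable ℂ f ∧ ∀ x : ℝ, (f (x : ℂ)).im = 0

/-- A function is transcendental if it is not a polynomial. -/
def TranscendentalFun (f : ℂ → ℂ) : Prop :=
  ¬ ∃ p : Polynomial ℂ, ∀ z : ℂ, f z = p.eval z

/-- The maximum modulus `M(r, f)`. -/
def maxMod (f : ℂ → ℂ) (r : ℝ) : ℝ :=
  sSup ((fun z => ‖f z‖) '' Metric.sphere (0 : ℂ) r)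

/-- `f` has infinite order: `limsup (log log M(r,f)) / log r = ∞`. -/
def InfiniteOrder (f : ℂ → ℂ) : Prop :=
  ∀ c r₀ : ℝ, ∃ r : ℝ, r₀ ≤ r ∧ c * Real.log r < Real.log (Real.log (maxMod f r))

/-- `f` has only finitely many non-real zeros. -/
def FinitelyManyNonRealZeros (f : ℂ → ℂ) : Prop :=
  {z : ℂ | z.im ≠ 0 ∧ f z = 0}.Finite

open Classical in
/-- The order of a meromorphic function at a point (junk value `0` if not meromorphic there). -/
def merOrder (g : ℂ → ℂ) (z : ℂ) : WithTop ℤ :=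
  if h : MeromorphicAt g z then meromorphicOrderAt g z else 0

/-- Multiplicity of `z` as a zero of `g` (0 if not a zero). -/
def zeroMult (g : ℂ → ℂ) (z : ℂ) : ℕ := ((merOrder g z).untopD 0).toNat

/-- Multiplicity of `z` as a pole of `g` (0 if not a pole). -/
def poleMult (g : ℂ → ℂ) (z : ℂ) : ℕ := (-((merOrder g z).untopD 0)).toNat

/-- `g` has a pole at `z`. -/
def IsPoleAt (g : ℂ → ℂ) (z : ℂ) : Prop := MeromorphicAt g z ∧ merOrder g z < 0

/-- The Weierstrass primary factor `E_q(w)`. -/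
def weierstrassE (q : ℕ) (w : ℂ) : ℂ :=
  (1 - w) * Complex.exp (∑ k ∈ Finset.range q, w ^ (k + 1) / ((k : ℂ) + 1))

/-- A real entire function with only real zeros, of genus at most `2p+1`,
written in Hadamard product form. -/
def GenusForm (p : ℕ) (g : ℂ → ℂ) : Prop :=
  ∃ (c : ℝ) (μ : ℕ) (Q : Polynomial ℝ) (q : ℕ) (ι : Type) (a : ι → ℝ),
    Countable ι ∧ c ≠ 0 ∧ Q.natDegree ≤ 2 * p + 1 ∧ q ≤ 2 * p + 1 ∧
    (∀ i, a i ≠ 0) ∧ Summable (fun i => |a i| ^ (-((q : ℝ) + 1))) ∧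
    ∀ z : ℂ, g z = (c : ℂ) * z ^ μ * Complex.exp ((Q.map (algebraMap ℝ ℂ)).eval z) *
      ∏' i, weierstrassE q (z / (a i : ℂ))

/-- The class `V_{2p}`. -/
def VClass (p : ℕ) : Set (ℂ → ℂ) :=
  {f | ∃ (a : ℝ) (g : ℂ → ℂ), 0 ≤ a ∧ Differentiable ℂ g ∧ GenusForm p g ∧
    ∀ z : ℂ, f z = g z * Complex.exp (-(a : ℂ) * z ^ (2 * p + 2))}

/-- The class `U_{2p}`: `U_0 = V_0`, `U_{2p} = V_{2p} \ V_{2p-2}` for `p ≥ 1`. -/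
def UClass (p : ℕ) : Set (ℂ → ℂ) :=
  if p = 0 then VClass 0 else VClass p \ VClass (p - 1)

/-- The class `U_{2p}^*`: functions `f = P·h` with `h ∈ U_{2p}` and `P` a real
polynomial without real zeros. -/
def UStarClass (p : ℕ) : Set (ℂ → ℂ) :=
  {f | ∃ (P : Polynomial ℝ) (h : ℂ → ℂ), (∀ x : ℝ, P.eval x ≠ 0) ∧ h ∈ UClass p ∧
    ∀ z : ℂ, f z = (P.map (algebraMap ℝ ℂ)).eval z * h z}

/-- Positive part of the logarithm. -/
def posLog (x : ℝ) : ℝ := max (Real.log x) 0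

/-- `𝔫(t, g)`: number of poles of `g`, with multiplicity, in `{z : |z - it/2| ≤ t/2, |z| ≥ 1}`. -/
def tsujiSmalln (g : ℂ → ℂ) (t : ℝ) : ℝ :=
  ∑' z : {z : ℂ | ‖z - Complex.I * (t / 2)‖ ≤ t / 2 ∧ 1 ≤ ‖z‖},
    (poleMult g z : ℝ)

/-- `𝔑(r, g)`. -/
def tsujiBigN (g : ℂ → ℂ) (r : ℝ) : ℝ :=
  ∫ t in (1 : ℝ)..r, tsujiSmalln g t / t ^ 2

/-- `𝔪(r, g)`. -/
def tsujiM (g : ℂ → ℂ) (r : ℝ) : ℝ :=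
  (2 * Real.pi)⁻¹ * ∫ θ in Real.arcsin (1 / r)..(Real.pi - Real.arcsin (1 / r)),
    posLog ‖g ((r * Real.sin θ : ℝ) * Complex.exp (θ * Complex.I))‖ /
      (r * Real.sin θ ^ 2)

/-- The Tsuji characteristic `𝔗(r, g) = 𝔪(r, g) + 𝔑(r, g)`. -/
def tsujiT (g : ℂ → ℂ) (r : ℝ) : ℝ := tsujiM g r + tsujiBigN g r

/-- `𝔗(r, g) = O(log r)` as `r → ∞`. -/
def TsujiLogBounded (g : ℂ → ℂ) : Prop :=
  ∃ C r₀ : ℝ, ∀ r : ℝ, r₀ ≤ r → tsujiT g r ≤ C * Real.log r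

/-- `g` has at least `n` zeros, counted with multiplicity, in the set `S`. -/
def ZerosAtLeast (g : ℂ → ℂ) (S : Set ℂ) (n : ℕ) : Prop :=
  ∃ (zs : Finset ℂ) (m : ℂ → ℕ),
    (↑zs : Set ℂ) ⊆ S ∧
    (∀ z ∈ zs, 1 ≤ m z ∧ ∀ k < m z, iteratedDeriv k g z = 0) ∧
    n ≤ ∑ z ∈ zs, m z

/-- The logarithmic derivative `L = f'/f`. -/
def Lfun (f : ℂ → ℂ) : ℂ → ℂ := fun z => deriv f z / f z

/-- The auxiliary function `F = (T·L − 1)/(L + T)`, `T = tan`. -/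
def Ffun (f : ℂ → ℂ) : ℂ → ℂ := fun z =>
  (Complex.tan z * Lfun f z - 1) / (Lfun f z + Complex.tan z)

/-- The auxiliary function `s_a = T·(F − a)/(T − F)`. -/
def sfun (f : ℂ → ℂ) (a : ℂ) : ℂ → ℂ := fun z =>
  Complex.tan z * (Ffun f z - a) / (Complex.tan z - Ffun f z)


/-! ### Auxiliary lemmas for Statement 12 -/

section Stmt12Aux

open Complex

lemma aux_cos_ne_zero_of_im {z : ℂ} (hz : z.im ≠ 0) : Complex.cos z ≠ 0 := by
  intro h
  obtain ⟨k, hk⟩ := Complex.cos_eq_zero_iff.mp h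
  apply hz
  rw [hk]
  have : ((2 * (k : ℂ) + 1) * (Real.pi : ℂ) / 2) = (((2 * (k : ℝ) + 1) * Real.pi / 2 : ℝ) : ℂ) := by
    push_cast; ring
  rw [this, Complex.ofReal_im]

lemma aux_one_add_tan_sq_ne {z : ℂ} (hc : Complex.cos z ≠ 0) :
    (1 : ℂ) + Complex.tan z ^ 2 ≠ 0 := by
  intro h
  have h2 := Complex.inv_one_add_tan_sq hc
  rw [h, inv_zero] at h2
  exact pow_ne_zero 2 hc h2.symm

lemma aux_analyticAt_tan {z : ℂ} (hc : Complex.cos z ≠ 0) : AnalyticAt ℂ Complex.tan z := by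
  have h : Complex.tan = fun w => Complex.sin w / Complex.cos w :=
    funext fun w => Complex.tan_eq_sin_div_cos w
  rw [h]
  exact (Complex.differentiable_sin.analyticAt z).div (Complex.differentiable_cos.analyticAt z) hc

lemma aux_deriv_entire {f : ℂ → ℂ} (hd : Differentiable ℂ f) : Differentiable ℂ (deriv f) :=
  fun w => (((hd.differentiableOn.analyticOnNhd isOpen_univ).deriv) w (Set.mem_univ w)).differentiableAt

lemma aux_entire_zero_of_eventually {g : ℂ → ℂ} (hg : Differentiable ℂ g) {z : ℂ}
    (h : ∀ᶠ w in 𝓝 z, g w = 0) (w : ℂ) : g w = 0 :=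
  (hg.differentiableOn.analyticOnNhd isOpen_univ).eqOn_zero_of_preconnected_of_eventuallyEq_zero
    isPreconnected_univ (Set.mem_univ z) h (Set.mem_univ w)

lemma aux_infinite_nonreal : {z : ℂ | z.im ≠ 0}.Infinite := by
  refine Set.infinite_of_injective_forall_mem
    (f := fun n : ℕ => (((n : ℝ) + 1) : ℂ) * Complex.I) ?_ ?_
  · intro a b hab
    have h := congrArg Complex.im hab
    simp at h
    exact_mod_cast h
  · intro n
    simp [Set.mem_setOf_eq]
    positivity

lemma aux_merOrder_eq {g : ℂ → ℂ} {z : ℂ} (h : MeromorphicAt g z) :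
    merOrder g z = meromorphicOrderAt g z := dif_pos h

lemma aux_zeroMult_analytic_ne {g : ℂ → ℂ} {z : ℂ} (hga : AnalyticAt ℂ g z) (hgz : g z ≠ 0) :
    zeroMult g z = 0 := by
  have hord : analyticOrderAt g z = (0 : ℕ) := by
    rw [hga.analyticOrderAt_eq_natCast]
    exact ⟨g, hga, hgz, by simp⟩
  rw [zeroMult, aux_merOrder_eq hga.meromorphicAt, hga.meromorphicOrderAt_eq, hord]
  simp

lemma aux_zpow_helper {x : ℂ} (hx : x ≠ 0) (k m s : ℕ) :
    x ^ ((k : ℤ) + m - 2 * s) = x ^ k * x ^ m / (x ^ s) ^ 2 := by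
  have h1 : x ^ k * x ^ m / (x ^ s) ^ 2 = x ^ (k + m) / x ^ (s * 2) := by
    rw [← pow_add, ← pow_mul]
  rw [h1, ← zpow_natCast x (k + m), ← zpow_natCast x (s * 2), ← zpow_sub₀ hx]
  congr 1
  push_cast
  ring

lemma aux_deriv_Ffun_eq {f : ℂ → ℂ} (hd : Differentiable ℂ f) (hd1 : Differentiable ℂ (deriv f))
    {w : ℂ} (hc : Complex.cos w ≠ 0) (hfw : f w ≠ 0)
    (hhw : deriv f w + Complex.tan w * f w ≠ 0) :
    deriv (Ffun f) w =
      (1 + Complex.tan w ^ 2) * ((deriv (deriv f) w + f w) * f w) /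
        (deriv f w + Complex.tan w * f w) ^ 2 := by
  have htan := Complex.hasDerivAt_tan hc
  have hL : HasDerivAt (fun z => deriv f z / f z)
      ((deriv (deriv f) w * f w - deriv f w * deriv f w) / f w ^ 2) w :=
    ((hd1 w).hasDerivAt).div ((hd w).hasDerivAt) hfw
  have hden_ne : deriv f w / f w + Complex.tan w ≠ 0 := by
    intro h0
    apply hhw
    have h1 : f w * (deriv f w / f w + Complex.tan w) = deriv f w + Complex.tan w * f w := by
      field_simp
    rw [← h1, h0, mul_zero]
  have hnum : HasDerivAt (fun z => Complex.tan z * (deriv f z / f z) - 1)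
      (1 / Complex.cos w ^ 2 * (deriv f w / f w) +
        Complex.tan w * ((deriv (deriv f) w * f w - deriv f w * deriv f w) / f w ^ 2)) w :=
    (htan.mul hL).sub_const 1
  have hden : HasDerivAt (fun z => deriv f z / f z + Complex.tan z)
      ((deriv (deriv f) w * f w - deriv f w * deriv f w) / f w ^ 2 + 1 / Complex.cos w ^ 2) w :=
    hL.add htan
  have hF : HasDerivAt (Ffun f)
      (((1 / Complex.cos w ^ 2 * (deriv f w / f w) +
        Complex.tan w * ((deriv (deriv f) w * f w - deriv f w * deriv f w) / f w ^ 2)) *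
        (deriv f w / f w + Complex.tan w) -
        (Complex.tan w * (deriv f w / f w) - 1) *
        ((deriv (deriv f) w * f w - deriv f w * deriv f w) / f w ^ 2 + 1 / Complex.cos w ^ 2)) /
        (deriv f w / f w + Complex.tan w) ^ 2) w := by
    have h := hnum.div hden hden_ne
    exact h.congr_of_eventuallyEq (Filter.Eventually.of_forall fun x => rfl)
  rw [hF.deriv]
  have h1 : (1 : ℂ) / Complex.cos w ^ 2 = 1 + Complex.tan w ^ 2 := by
    rw [one_div, ← Complex.inv_one_add_tan_sq hc, inv_inv]
  rw [h1]
  have e4 : deriv f w / f w + Complex.tan w = (deriv f w + Complex.tan w * f w) / f w := by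
    field_simp
  rw [e4, div_pow, div_div_eq_mul_div, eq_div_iff (pow_ne_zero 2 hhw), div_mul_eq_mul_div,
    mul_div_assoc, div_self (pow_ne_zero 2 hhw), mul_one]
  field_simp [hfw]
  ring

lemma aux_key_main {f : ℂ → ℂ} (hd : Differentiable ℂ f)
    (hf0 : ∃ w, f w ≠ 0)
    (hg0 : ∃ w : ℂ, w.im ≠ 0 ∧ deriv (deriv f) w + f w ≠ 0)
    {z : ℂ} (hz : z.im ≠ 0) :
    zeroMult (deriv (Ffun f)) z ≤
      (if f z = 0 then 1 else 0) + zeroMult (fun w => deriv (deriv f) w + f w) z := by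
  have hd1 : Differentiable ℂ (deriv f) := aux_deriv_entire hd
  have hd2 : Differentiable ℂ (deriv (deriv f)) := aux_deriv_entire hd1
  have hc : Complex.cos z ≠ 0 := aux_cos_ne_zero_of_im hz
  have htan_an : AnalyticAt ℂ Complex.tan z := aux_analyticAt_tan hc
  have hfa : AnalyticAt ℂ f z := hd.analyticAt z
  have hga : AnalyticAt ℂ (fun w => deriv (deriv f) w + f w) z :=
    (hd2.analyticAt z).add (hd.analyticAt z)
  -- order of f at z is finite
  have hford : analyticOrderAt f z ≠ ⊤ := by
    intro htop
    rw [analyticOrderAt_eq_top] at htop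
    obtain ⟨w0, hw0⟩ := hf0
    exact hw0 (aux_entire_zero_of_eventually hd htop w0)
  obtain ⟨m, hm⟩ := WithTop.ne_top_iff_exists.mp hford
  obtain ⟨u, hu_an, hu_ne, hu_eq⟩ := (hfa.analyticOrderAt_eq_natCast).mp hm.symm
  -- order of g at z is finite
  have hgord : analyticOrderAt (fun w => deriv (deriv f) w + f w) z ≠ ⊤ := by
    intro htop
    rw [analyticOrderAt_eq_top] at htop
    obtain ⟨w0, hw0im, hw0⟩ := hg0
    exact hw0 (aux_entire_zero_of_eventually (hd2.add hd) htop w0)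
  obtain ⟨k, hk⟩ := WithTop.ne_top_iff_exists.mp hgord
  obtain ⟨v, hv_an, hv_ne, hv_eq⟩ := (hga.analyticOrderAt_eq_natCast).mp hk.symm
  -- representation of h = f' + tan * f
  obtain ⟨s, W, hW_an, hW_ne, hh_eq, hcase⟩ :
      ∃ (s : ℕ) (W : ℂ → ℂ), AnalyticAt ℂ W z ∧ W z ≠ 0 ∧
        (∀ᶠ w in 𝓝 z, deriv f w + Complex.tan w * f w = (w - z) ^ s * W w) ∧
        ((f z ≠ 0 ∧ (k : ℤ) + m - 2 * s ≤ k) ∨ (f z = 0 ∧ (k : ℤ) + m - 2 * s ≤ k + 1)) := by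
    rcases m with _ | m'
    · -- m = 0 : f z ≠ 0, h analytic with finite order
      have hfz : f z ≠ 0 := by
        have h0 := hu_eq.self_of_nhds
        simp only [pow_zero, sub_self, one_smul] at h0
        rw [h0]; exact hu_ne
      have hha : AnalyticAt ℂ (fun w => deriv f w + Complex.tan w * f w) z :=
        (hd1.analyticAt z).add (htan_an.mul (hd.analyticAt z))
      have hhord : analyticOrderAt (fun w => deriv f w + Complex.tan w * f w) z ≠ ⊤ := by
        intro htop
        rw [analyticOrderAt_eq_top] at htop
        have hcos_ev : ∀ᶠ w in 𝓝 z, Complex.cos w ≠ 0 :=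
          Complex.continuous_cos.continuousAt.eventually_ne hc
        have hH0 : ∀ᶠ w in 𝓝 z, deriv f w * Complex.cos w + f w * Complex.sin w = 0 := by
          filter_upwards [htop, hcos_ev] with w hw hcw
          have h2 : deriv f w * Complex.cos w + f w * Complex.sin w =
              Complex.cos w * (deriv f w + Complex.tan w * f w) := by
            rw [mul_add]
            rw [show Complex.cos w * (Complex.tan w * f w) =
              (Complex.tan w * Complex.cos w) * f w by ring, Complex.tan_mul_cos hcw]
            ring
          rw [h2, hw, mul_zero]
        have hHdiff : Differentiable ℂ
            (fun w => deriv f w * Complex.cos w + f w * Complex.sin w) :=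
          (hd1.mul Complex.differentiable_cos).add (hd.mul Complex.differentiable_sin)
        have hHz := aux_entire_zero_of_eventually hHdiff hH0
        obtain ⟨w1, hw1, hgw1⟩ := hg0
        have hcw1 : Complex.cos w1 ≠ 0 := aux_cos_ne_zero_of_im hw1
        have hH : (fun w => deriv f w * Complex.cos w + f w * Complex.sin w)
            = fun _ => (0 : ℂ) := funext hHz
        have hd0 : deriv (fun w => deriv f w * Complex.cos w + f w * Complex.sin w) w1 = 0 := by
          rw [hH]; simp
        have hDH : HasDerivAt (fun w => deriv f w * Complex.cos w + f w * Complex.sin w)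
            (deriv (deriv f) w1 * Complex.cos w1 + deriv f w1 * (-Complex.sin w1) +
              (deriv f w1 * Complex.sin w1 + f w1 * Complex.cos w1)) w1 :=
          (((hd1 w1).hasDerivAt.mul (Complex.hasDerivAt_cos w1)).add
            ((hd w1).hasDerivAt.mul (Complex.hasDerivAt_sin w1)))
        have hDHd := hDH.deriv
        rw [hd0] at hDHd
        apply mul_ne_zero hgw1 hcw1
        linear_combination -hDHd
      obtain ⟨s, hs⟩ := WithTop.ne_top_iff_exists.mp hhord
      obtain ⟨W, hW_an, hW_ne, hW_eq⟩ := (hha.analyticOrderAt_eq_natCast).mp hs.symm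
      refine ⟨s, W, hW_an, hW_ne, ?_, Or.inl ⟨hfz, by push_cast; omega⟩⟩
      filter_upwards [hW_eq] with w hw
      simpa [smul_eq_mul] using hw
    · -- m = m' + 1 : f z = 0
      have hfz : f z = 0 := by
        have h0 := hu_eq.self_of_nhds
        simpa using h0
      obtain ⟨S, hS_mem, hS_an⟩ := hu_an.exists_mem_nhds_analyticOnNhd
      have hu'_an : AnalyticAt ℂ (deriv u) z := hS_an.deriv z (mem_of_mem_nhds hS_mem)
      set W : ℂ → ℂ := fun w => ((m' : ℂ) + 1) * u w + (w - z) * deriv u w +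
        Complex.tan w * ((w - z) * u w) with hW_def
      have hW_an : AnalyticAt ℂ W z := by
        apply AnalyticAt.add
        apply AnalyticAt.add
        · exact (analyticAt_const.mul hu_an)
        · exact (analyticAt_id.sub analyticAt_const).mul hu'_an
        · exact htan_an.mul ((analyticAt_id.sub analyticAt_const).mul hu_an)
      have hW_ne : W z ≠ 0 := by
        have : W z = ((m' : ℂ) + 1) * u z := by simp [hW_def]
        rw [this]
        have hcast : ((m' : ℂ) + 1) = ((m' + 1 : ℕ) : ℂ) := by push_cast; ring
        rw [hcast]
        exact mul_ne_zero (Nat.cast_ne_zero.mpr (Nat.succ_ne_zero m')) hu_ne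
      refine ⟨m', W, hW_an, hW_ne, ?_, Or.inr ⟨hfz, by push_cast; omega⟩⟩
      -- eventual equality
      have hu_ev : ∀ᶠ w in 𝓝 z, AnalyticAt ℂ u w := hu_an.eventually_analyticAt
      have hder_ev : deriv f =ᶠ[𝓝 z] deriv (fun w => (w - z) ^ (m' + 1) * u w) := by
        apply Filter.EventuallyEq.deriv
        filter_upwards [hu_eq] with w hw
        simpa [smul_eq_mul] using hw
      filter_upwards [hder_ev, hu_eq, hu_ev] with w hdw hfw huw
      have hpow : HasDerivAt (fun w : ℂ => (w - z) ^ (m' + 1))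
          (((m' : ℂ) + 1) * (w - z) ^ m') w := by
        have h := ((hasDerivAt_id w).sub_const z).pow (m' + 1)
        simp at h
        exact h.congr_of_eventuallyEq (Filter.Eventually.of_forall fun x => rfl)
      have hprod : HasDerivAt (fun w => (w - z) ^ (m' + 1) * u w)
          (((m' : ℂ) + 1) * (w - z) ^ m' * u w + (w - z) ^ (m' + 1) * deriv u w) w :=
        hpow.mul huw.differentiableAt.hasDerivAt
      rw [hdw, hprod.deriv]
      rw [show f w = (w - z) ^ (m' + 1) * u w by simpa [smul_eq_mul] using hfw]
      rw [hW_def]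
      ring
  -- the meromorphic representation of deriv (Ffun f)
  set n : ℤ := (k : ℤ) + m - 2 * s with hn_def
  set U : ℂ → ℂ := fun w => (1 + Complex.tan w ^ 2) * (v w * u w) / (W w) ^ 2 with hU_def
  have hU_an : AnalyticAt ℂ U z := by
    apply AnalyticAt.div
    · exact (analyticAt_const.add (htan_an.pow 2)).mul (hv_an.mul hu_an)
    · exact hW_an.pow 2
    · exact pow_ne_zero 2 hW_ne
  have hU_ne : U z ≠ 0 := by
    rw [hU_def]
    exact div_ne_zero (mul_ne_zero (aux_one_add_tan_sq_ne hc) (mul_ne_zero hv_ne hu_ne))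
      (pow_ne_zero 2 hW_ne)
  have hev : ∀ᶠ w in 𝓝[≠] z, deriv (Ffun f) w = (w - z) ^ n • U w := by
    have h1 : ∀ᶠ w in 𝓝 z, Complex.cos w ≠ 0 :=
      Complex.continuous_cos.continuousAt.eventually_ne hc
    have h2 : ∀ᶠ w in 𝓝 z, u w ≠ 0 := hu_an.continuousAt.eventually_ne hu_ne
    have h3 : ∀ᶠ w in 𝓝 z, W w ≠ 0 := hW_an.continuousAt.eventually_ne hW_ne
    filter_upwards [nhdsWithin_le_nhds hu_eq, nhdsWithin_le_nhds hv_eq,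
      nhdsWithin_le_nhds hh_eq, nhdsWithin_le_nhds h1, nhdsWithin_le_nhds h2,
      nhdsWithin_le_nhds h3, self_mem_nhdsWithin] with w hfw_eq hgw_eq hhw_eq hcw huw hWw hwz
    have hx : w - z ≠ 0 := sub_ne_zero.mpr hwz
    have hfw_eq' : f w = (w - z) ^ m * u w := by simpa [smul_eq_mul] using hfw_eq
    have hgw_eq' : deriv (deriv f) w + f w = (w - z) ^ k * v w := by
      simpa [smul_eq_mul] using hgw_eq
    have hfw : f w ≠ 0 := by
      rw [hfw_eq']; exact mul_ne_zero (pow_ne_zero _ hx) huw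
    have hhw : deriv f w + Complex.tan w * f w ≠ 0 := by
      rw [hhw_eq]; exact mul_ne_zero (pow_ne_zero _ hx) hWw
    rw [aux_deriv_Ffun_eq hd hd1 hcw hfw hhw, hgw_eq', hhw_eq, hfw_eq', smul_eq_mul,
      hU_def, hn_def, aux_zpow_helper hx k m s]
    field_simp
  have hmero : MeromorphicAt (deriv (Ffun f)) z :=
    MeromorphicAt.iff_eventuallyEq_zpow_smul_analyticAt.mpr ⟨n, U, hU_an, hev⟩
  have horder : meromorphicOrderAt (deriv (Ffun f)) z = n := (meromorphicOrderAt_eq_int_iff hmero).mpr ⟨U, hU_an, hU_ne, hev⟩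
  have hzm1 : zeroMult (deriv (Ffun f)) z = n.toNat := by
    rw [zeroMult, aux_merOrder_eq hmero, horder]
    simp
  have hzm2 : zeroMult (fun w => deriv (deriv f) w + f w) z = k := by
    have hmap : ENat.map (Nat.cast : ℕ → ℤ) (analyticOrderAt (fun w => deriv (deriv f) w + f w) z) = ((k : ℤ) : WithTop ℤ) := by
      rw [← hk]; rfl
    rw [zeroMult, aux_merOrder_eq hga.meromorphicAt, hga.meromorphicOrderAt_eq, hmap,
      WithTop.untopD_coe, Int.toNat_natCast]
  rw [hzm1, hzm2]
  rcases hcase with ⟨hfz, hb⟩ | ⟨hfz, hb⟩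
  · rw [if_neg hfz, zero_add]
    omega
  · rw [if_pos hfz]
    omega

end Stmt12Aux

theorem stmt12 (f : ℂ → ℂ) (hre : RealEntire f) (htr : TranscendentalFun f)
    (hz1 : FinitelyManyNonRealZeros f)
    (hz2 : FinitelyManyNonRealZeros (fun z => deriv (deriv f) z + f z)) :
    (∀ X : Set ℂ, X ⊆ {z : ℂ | z.im ≠ 0} →
      (∑' z : X, (zeroMult (deriv (Ffun f)) z : ℝ≥0∞)) ≤
        (∑' z : X, (if f z = 0 then 1 else 0 : ℝ≥0∞)) +
        ∑' z : X, (zeroMult (fun w => deriv (deriv f) w + f w) z : ℝ≥0∞)) ∧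
    {z : ℂ | z.im ≠ 0 ∧ zeroMult (deriv (Ffun f)) z ≠ 0}.Finite := by
  obtain ⟨hdf, -⟩ := hre
  have hd1 : Differentiable ℂ (deriv f) := aux_deriv_entire hdf
  have hd2 : Differentiable ℂ (deriv (deriv f)) := aux_deriv_entire hd1
  have hf0 : ∃ w, f w ≠ 0 := by
    by_contra h
    push_neg at h
    exact htr ⟨0, fun z => by simp [h z]⟩
  have hg0 : ∃ w : ℂ, w.im ≠ 0 ∧ deriv (deriv f) w + f w ≠ 0 := by
    by_contra h
    push_neg at h
    have hs : {z : ℂ | z.im ≠ 0} ⊆ {z : ℂ | z.im ≠ 0 ∧ deriv (deriv f) z + f z = 0} :=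
      fun w hw => ⟨hw, h w hw⟩
    exact aux_infinite_nonreal (hz2.subset hs)
  have key : ∀ z : ℂ, z.im ≠ 0 → zeroMult (deriv (Ffun f)) z ≤
      (if f z = 0 then 1 else 0) + zeroMult (fun w => deriv (deriv f) w + f w) z :=
    fun z hz => aux_key_main hdf hf0 hg0 hz
  constructor
  · intro X hX
    have hle : ∀ z : X, (zeroMult (deriv (Ffun f)) z : ℝ≥0∞) ≤
        (if f (z : ℂ) = 0 then 1 else 0 : ℝ≥0∞) +
          (zeroMult (fun w => deriv (deriv f) w + f w) z : ℝ≥0∞) := by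
      intro z
      have hzz := key z (hX z.2)
      by_cases hfz : f (z : ℂ) = 0
      · rw [if_pos hfz] at hzz ⊢
        calc (zeroMult (deriv (Ffun f)) (z : ℂ) : ℝ≥0∞)
            ≤ ((1 + zeroMult (fun w => deriv (deriv f) w + f w) (z : ℂ) : ℕ) : ℝ≥0∞) := by
              exact_mod_cast hzz
          _ = _ := by push_cast; ring
      · rw [if_neg hfz] at hzz ⊢
        calc (zeroMult (deriv (Ffun f)) (z : ℂ) : ℝ≥0∞)
            ≤ ((0 + zeroMult (fun w => deriv (deriv f) w + f w) (z : ℂ) : ℕ) : ℝ≥0∞) := by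
              exact_mod_cast hzz
          _ = _ := by push_cast; ring
    calc ∑' z : X, (zeroMult (deriv (Ffun f)) z : ℝ≥0∞)
        ≤ ∑' z : X, ((if f (z : ℂ) = 0 then 1 else 0 : ℝ≥0∞) +
            (zeroMult (fun w => deriv (deriv f) w + f w) z : ℝ≥0∞)) :=
          ENNReal.tsum_le_tsum hle
      _ = _ := ENNReal.tsum_add
  · apply (hz1.union hz2).subset
    rintro z ⟨hzim, hzm⟩
    by_cases hfz : f z = 0
    · exact Or.inl ⟨hzim, hfz⟩
    · refine Or.inr ⟨hzim, ?_⟩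
      have hzz := key z hzim
      rw [if_neg hfz, zero_add] at hzz
      by_contra hgz
      have hga : AnalyticAt ℂ (fun w => deriv (deriv f) w + f w) z :=
        (hd2.analyticAt z).add (hdf.analyticAt z)
      rw [aux_zeroMult_analytic_ne hga hgz] at hzz
      omega


end
end

section
/- Let f be a real transcendental entire function, and let L = f′/f, T(z) = tan z, F = (T·L − 1)/(L + T). Then L − i and F − i have exactly the same zeros with the same multiplicities: for every z₀ ∈ ℂ and every integer m ≥ 1, L − i has a zero of multiplicity m at z₀ if and only if F − i has a zero of multiplicity m at z₀. In particular, every such z₀ is non-real. -/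
open Complex Set Filter MeasureTheory Topology
open scoped ENNReal

noncomputable section

section Helpers

namespace MeromorphicAt

def order {g : ℂ → ℂ} {x : ℂ} (_h : MeromorphicAt g x) : WithTop ℤ := meromorphicOrderAt g x

lemma order_eq_top_iff {g : ℂ → ℂ} {x : ℂ} (h : MeromorphicAt g x) :
    h.order = ⊤ ↔ ∀ᶠ z in 𝓝[≠] x, g z = 0 := meromorphicOrderAt_eq_top_iff

lemma order_eq_int_iff {g : ℂ → ℂ} {x : ℂ} (h : MeromorphicAt g x) (n : ℤ) :
    h.order = n ↔ ∃ g₁ : ℂ → ℂ, AnalyticAt ℂ g₁ x ∧ g₁ x ≠ 0 ∧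
      ∀ᶠ z in 𝓝[≠] x, g z = (z - x) ^ n • g₁ z := meromorphicOrderAt_eq_int_iff h

end MeromorphicAt

namespace AnalyticAt

def order {g : ℂ → ℂ} {x : ℂ} (_h : AnalyticAt ℂ g x) : ℕ∞ := analyticOrderAt g x

lemma order_eq_top_iff {g : ℂ → ℂ} {x : ℂ} (h : AnalyticAt ℂ g x) :
    h.order = ⊤ ↔ ∀ᶠ z in 𝓝 x, g z = 0 := analyticOrderAt_eq_top

lemma order_eq_nat_iff {g : ℂ → ℂ} {x : ℂ} (h : AnalyticAt ℂ g x) (n : ℕ) :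
    h.order = n ↔ ∃ g₁ : ℂ → ℂ, AnalyticAt ℂ g₁ x ∧ g₁ x ≠ 0 ∧
      ∀ᶠ z in 𝓝 x, g z = (z - x) ^ n • g₁ z := h.analyticOrderAt_eq_natCast

end AnalyticAt

lemma merOrder_eq {g : ℂ → ℂ} {x : ℂ} (h : MeromorphicAt g x) : merOrder g x = h.order := by
  rw [merOrder]; exact dif_pos h

namespace MeromorphicAt

lemma order_congr' {g h : ℂ → ℂ} {x : ℂ} (hg : MeromorphicAt g x) (hh : MeromorphicAt h x)
    (he : ∀ᶠ z in 𝓝[≠] x, g z = h z) : hg.order = hh.order := by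
  rcases eq_or_ne hg.order ⊤ with h0 | h0
  · rw [h0, eq_comm, hh.order_eq_top_iff]
    filter_upwards [hg.order_eq_top_iff.mp h0, he] with z h1 h2
    rw [← h2]; exact h1
  · obtain ⟨n, hn⟩ := WithTop.ne_top_iff_exists.mp h0
    obtain ⟨g₁, hg₁, hg₁x, hev⟩ := (hg.order_eq_int_iff n).mp hn.symm
    rw [← hn, eq_comm, hh.order_eq_int_iff]
    exact ⟨g₁, hg₁, hg₁x, by filter_upwards [hev, he] with z h1 h2; rw [← h2]; exact h1⟩

lemma le_order_iff {g : ℂ → ℂ} {x : ℂ} (hg : MeromorphicAt g x) (n : ℤ) :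
    (n : WithTop ℤ) ≤ hg.order ↔
      ∃ h : ℂ → ℂ, AnalyticAt ℂ h x ∧ ∀ᶠ z in 𝓝[≠] x, g z = (z - x) ^ n * h z := by
  constructor
  · intro hle
    rcases eq_or_ne hg.order ⊤ with h0 | h0
    · exact ⟨0, analyticAt_const, by
        filter_upwards [hg.order_eq_top_iff.mp h0] with z hz; simp [hz]⟩
    · obtain ⟨k, hk⟩ := WithTop.ne_top_iff_exists.mp h0
      obtain ⟨g₁, hg₁, _, hev⟩ := (hg.order_eq_int_iff k).mp hk.symm
      have hnk : n ≤ k := by rw [← hk] at hle; exact_mod_cast hle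
      refine ⟨fun z => (z - x) ^ (k - n).toNat * g₁ z,
        ((analyticAt_id.sub analyticAt_const).pow _).mul hg₁, ?_⟩
      filter_upwards [hev, self_mem_nhdsWithin] with z h1 h2
      have hzx : z - x ≠ 0 := sub_ne_zero.2 h2
      rw [h1, smul_eq_mul, ← mul_assoc, ← zpow_natCast (z - x) (k - n).toNat,
        ← zpow_add₀ hzx, Int.toNat_of_nonneg (sub_nonneg.2 hnk)]
      ring_nf
  · rintro ⟨h, hh, hev⟩
    rcases eq_or_ne hh.order ⊤ with h0 | h0
    · have : hg.order = ⊤ := hg.order_eq_top_iff.mpr (by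
        filter_upwards [hev, (hh.order_eq_top_iff.mp h0).filter_mono nhdsWithin_le_nhds]
          with z h1 h2
        rw [h1, h2, mul_zero])
      simp [this]
    · obtain ⟨k, hk⟩ := WithTop.ne_top_iff_exists.mp h0
      obtain ⟨h₁, hh₁, hx₁, hev₁⟩ := (hh.order_eq_nat_iff k).mp hk.symm
      have : hg.order = ((n + k : ℤ) : WithTop ℤ) := by
        rw [hg.order_eq_int_iff]
        refine ⟨h₁, hh₁, hx₁, ?_⟩
        filter_upwards [hev, hev₁.filter_mono nhdsWithin_le_nhds, self_mem_nhdsWithin]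
          with z h1 h2 h3
        rw [h1, h2, smul_eq_mul, smul_eq_mul, ← mul_assoc, ← zpow_natCast (z - x) k,
          ← zpow_add₀ (sub_ne_zero.2 h3)]
      rw [this]
      exact_mod_cast WithTop.coe_le_coe.mpr (by omega)

lemma order_add_ge' {g h : ℂ → ℂ} {x : ℂ} (hg : MeromorphicAt g x) (hh : MeromorphicAt h x)
    (n : ℤ) (h1 : (n : WithTop ℤ) ≤ hg.order) (h2 : (n : WithTop ℤ) ≤ hh.order) :
    (n : WithTop ℤ) ≤ (hg.add hh).order := by
  obtain ⟨g₁, hg₁, he1⟩ := (hg.le_order_iff n).mp h1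
  obtain ⟨h₁, hh₁, he2⟩ := (hh.le_order_iff n).mp h2
  rw [(hg.add hh).le_order_iff n]
  refine ⟨g₁ + h₁, hg₁.add hh₁, ?_⟩
  filter_upwards [he1, he2] with z e1 e2
  simp only [Pi.add_apply, e1, e2]; ring

lemma order_add_eq_left {g h : ℂ → ℂ} {x : ℂ} (hg : MeromorphicAt g x) (hh : MeromorphicAt h x)
    (n : ℤ) (h1 : hg.order = n) (h2 : (n : WithTop ℤ) < hh.order) :
    (hg.add hh).order = n := by
  obtain ⟨g₁, hg₁, hg₁x, he1⟩ := (hg.order_eq_int_iff n).mp h1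
  have h2' : ((n + 1 : ℤ) : WithTop ℤ) ≤ hh.order := by
    rcases eq_or_ne hh.order ⊤ with h0 | h0
    · simp [h0]
    · obtain ⟨k, hk⟩ := WithTop.ne_top_iff_exists.mp h0
      rw [← hk] at h2 ⊢
      exact_mod_cast WithTop.coe_lt_coe.mp h2
  obtain ⟨h₁, hh₁, he2⟩ := (hh.le_order_iff (n + 1)).mp h2'
  rw [(hg.add hh).order_eq_int_iff]
  refine ⟨fun z => g₁ z + (z - x) * h₁ z,
    hg₁.add ((analyticAt_id.sub analyticAt_const).mul hh₁), by simpa using hg₁x, ?_⟩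
  filter_upwards [he1, he2, self_mem_nhdsWithin] with z e1 e2 e3
  have hzx : (z : ℂ) - x ≠ 0 := sub_ne_zero.2 e3
  simp only [Pi.add_apply, e1, e2, smul_eq_mul]
  rw [zpow_add₀ hzx, zpow_one]
  ring

lemma order_mul' {g h : ℂ → ℂ} {x : ℂ} (hg : MeromorphicAt g x) (hh : MeromorphicAt h x) :
    (hg.mul hh).order = hg.order + hh.order := by
  rcases eq_or_ne hg.order ⊤ with h0 | h0
  · rw [h0, top_add, (hg.mul hh).order_eq_top_iff]
    filter_upwards [hg.order_eq_top_iff.mp h0] with z hz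
    simp [Pi.mul_apply, hz]
  rcases eq_or_ne hh.order ⊤ with h1 | h1
  · rw [h1, add_top, (hg.mul hh).order_eq_top_iff]
    filter_upwards [hh.order_eq_top_iff.mp h1] with z hz
    simp [Pi.mul_apply, hz]
  obtain ⟨n, hn⟩ := WithTop.ne_top_iff_exists.mp h0
  obtain ⟨m, hm⟩ := WithTop.ne_top_iff_exists.mp h1
  obtain ⟨g₁, hg₁, hg₁x, he1⟩ := (hg.order_eq_int_iff n).mp hn.symm
  obtain ⟨h₁, hh₁, hh₁x, he2⟩ := (hh.order_eq_int_iff m).mp hm.symm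
  have : (hg.mul hh).order = ((n + m : ℤ) : WithTop ℤ) := by
    rw [(hg.mul hh).order_eq_int_iff]
    refine ⟨fun z => g₁ z * h₁ z, hg₁.mul hh₁, mul_ne_zero hg₁x hh₁x, ?_⟩
    filter_upwards [he1, he2, self_mem_nhdsWithin] with z e1 e2 e3
    simp only [Pi.mul_apply, e1, e2, smul_eq_mul]
    rw [zpow_add₀ (sub_ne_zero.2 e3)]
    ring
  rw [this, ← hn, ← hm]
  push_cast
  rfl

lemma eventually_ne_zero' {g : ℂ → ℂ} {x : ℂ} (hg : MeromorphicAt g x) (h : hg.order ≠ ⊤) :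
    ∀ᶠ z in 𝓝[≠] x, g z ≠ 0 := by
  obtain ⟨n, hn⟩ := WithTop.ne_top_iff_exists.mp h
  obtain ⟨g₁, hg₁, hg₁x, hev⟩ := (hg.order_eq_int_iff n).mp hn.symm
  filter_upwards [hev, (hg₁.continuousAt.eventually_ne hg₁x).filter_mono nhdsWithin_le_nhds,
    self_mem_nhdsWithin] with z e1 e2 e3
  rw [e1, smul_eq_mul]
  exact mul_ne_zero (zpow_ne_zero _ (sub_ne_zero.2 e3)) e2

end MeromorphicAt

lemma sin_lin_ne (c a : ℂ) (hc : c ≠ 0) (h : a = c * Complex.I ∨ a = -(c * Complex.I)) :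
    ∀ z, c * Complex.sin z + a * Complex.cos z ≠ 0 := by
  intro z
  rcases h with h | h <;> rw [h, Complex.sin, Complex.cos]
  · have : c * ((Complex.exp (-z * I) - Complex.exp (z * I)) * I / 2) +
        c * I * ((Complex.exp (z * I) + Complex.exp (-z * I)) / 2) =
        c * I * Complex.exp (-z * I) := by ring
    rw [this]
    exact mul_ne_zero (mul_ne_zero hc I_ne_zero) (Complex.exp_ne_zero _)
  · have : c * ((Complex.exp (-z * I) - Complex.exp (z * I)) * I / 2) +
        -(c * I) * ((Complex.exp (z * I) + Complex.exp (-z * I)) / 2) =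
        -(c * I) * Complex.exp (z * I) := by ring
    rw [this]
    exact mul_ne_zero (neg_ne_zero.2 (mul_ne_zero hc I_ne_zero)) (Complex.exp_ne_zero _)

lemma tan_lin_order {c a x : ℂ} (hnum : ∀ z, c * Complex.sin z + a * Complex.cos z ≠ 0)
    (h : MeromorphicAt (fun z => c * Complex.tan z + a) x) :
    h.order = (((if Complex.cos x = 0 then -1 else 0 : ℤ)) : WithTop ℤ) := by
  by_cases hc : Complex.cos x = 0
  · rw [if_pos hc]
    have hsx : Complex.sin x ≠ 0 := by
      intro h0
      have := Complex.sin_sq_add_cos_sq x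
      rw [h0, hc] at this; simp at this
    obtain ⟨p, hp⟩ := Complex.differentiable_cos.analyticAt x
    have hd : AnalyticAt ℂ (dslope Complex.cos x) x := ⟨_, hp.has_fpower_series_dslope_fslope⟩
    have hdx : dslope Complex.cos x x = -Complex.sin x := by
      rw [dslope_same, Complex.deriv_cos]
    have hco : ∀ z, Complex.cos z = (z - x) * dslope Complex.cos x z := by
      intro z
      have h1 := sub_smul_dslope Complex.cos x z
      rw [smul_eq_mul, hc, sub_zero] at h1
      exact h1.symm
    have hev : ∀ᶠ z in 𝓝[≠] x, Complex.cos z ≠ 0 := by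
      rcases (Complex.differentiable_cos.analyticAt x).eventually_eq_zero_or_eventually_ne_zero
        with h0 | h1
      · exfalso
        have : deriv Complex.cos x = deriv (fun _ => (0 : ℂ)) x :=
          Filter.EventuallyEq.deriv_eq h0
        rw [Complex.deriv_cos, deriv_const] at this
        exact hsx (neg_eq_zero.mp this)
      · exact h1
    rw [h.order_eq_int_iff]
    refine ⟨fun z => (c * Complex.sin z + a * Complex.cos z) / dslope Complex.cos x z,
      ?_, ?_, ?_⟩
    · exact ((analyticAt_const.mul (Complex.differentiable_sin.analyticAt x)).add
        (analyticAt_const.mul (Complex.differentiable_cos.analyticAt x))).div hd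
        (by rw [hdx]; exact neg_ne_zero.2 hsx)
    · exact div_ne_zero (hnum x) (by rw [hdx]; exact neg_ne_zero.2 hsx)
    · filter_upwards [hev, self_mem_nhdsWithin] with z hz hzx
      have hzx' : z - x ≠ 0 := sub_ne_zero.2 hzx
      have hdz : dslope Complex.cos x z ≠ 0 := by
        intro h0; exact hz (by rw [hco z, h0, mul_zero])
      rw [smul_eq_mul, Complex.tan_eq_sin_div_cos]
      rw [hco z] at hz ⊢
      field_simp
  · rw [if_neg hc]
    have hfn : (fun z => c * Complex.tan z + a) =
        fun z => c * (Complex.sin z / Complex.cos z) + a := by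
      funext z; rw [Complex.tan_eq_sin_div_cos]
    rw [h.order_eq_int_iff]
    refine ⟨fun z => c * Complex.tan z + a, ?_, ?_, ?_⟩
    · rw [hfn]
      exact (analyticAt_const.mul ((Complex.differentiable_sin.analyticAt x).div
        (Complex.differentiable_cos.analyticAt x) hc)).add analyticAt_const
    · show c * Complex.tan x + a ≠ 0
      rw [Complex.tan_eq_sin_div_cos]
      intro h0
      apply hnum x
      field_simp at h0
      linear_combination h0
    · exact Filter.Eventually.of_forall fun z => by simp

lemma realEntire_deriv_im {f : ℂ → ℂ} (hd : Differentiable ℂ f) (hr : ∀ x : ℝ, (f x).im = 0)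
    (x : ℝ) : (deriv f (x : ℂ)).im = 0 := by
  have hder : HasDerivAt f (deriv f (x : ℂ)) (x : ℂ) := (hd (x : ℂ)).hasDerivAt
  rw [hasDerivAt_iff_tendsto_slope] at hder
  have hmap : Tendsto (fun t : ℝ => (t : ℂ)) (𝓝[≠] x) (𝓝[≠] (x : ℂ)) := by
    rw [tendsto_nhdsWithin_iff]
    constructor
    · exact (Complex.continuous_ofReal.tendsto x).mono_left nhdsWithin_le_nhds
    · filter_upwards [self_mem_nhdsWithin] with t ht
      simp only [Set.mem_compl_iff, Set.mem_singleton_iff] at ht ⊢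
      exact fun h => ht (by exact_mod_cast h)
  have hs := hder.comp hmap
  have hzero : Tendsto (fun t : ℝ => (slope f (x : ℂ) (t : ℂ)).im) (𝓝[≠] x)
      (𝓝 ((deriv f (x : ℂ)).im)) := (Complex.continuous_im.tendsto _).comp hs
  have him : ∀ t : ℝ, (slope f (x : ℂ) (t : ℂ)).im = 0 := by
    intro t
    rw [slope_def_field]
    have h1 : ((t : ℂ) - (x : ℂ)) = ((t - x : ℝ) : ℂ) := by push_cast; ring
    rw [h1, Complex.div_im]
    simp [Complex.sub_im, hr t, hr x]
  have h2 : Tendsto (fun _ : ℝ => (0 : ℝ)) (𝓝[≠] x) (𝓝 ((deriv f (x : ℂ)).im)) := by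
    apply hzero.congr
    intro t; exact him t
  exact tendsto_nhds_unique h2 tendsto_const_nhds

end Helpers


theorem stmt14 (f : ℂ → ℂ) (hre : RealEntire f) (htr : TranscendentalFun f) :
    ∀ (z₀ : ℂ) (m : ℕ), 1 ≤ m →
      ((merOrder (fun z => Lfun f z - Complex.I) z₀ = ((m : ℤ) : WithTop ℤ)) ↔
        (merOrder (fun z => Ffun f z - Complex.I) z₀ = ((m : ℤ) : WithTop ℤ))) ∧
      (merOrder (fun z => Lfun f z - Complex.I) z₀ = ((m : ℤ) : WithTop ℤ) → z₀.im ≠ 0) := by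
  intro z₀ m hm
  have hfa : ∀ z, AnalyticAt ℂ f z := fun z => hre.1.analyticAt z
  have hda : ∀ z, AnalyticAt ℂ (deriv f) z := fun z =>
    (AnalyticOnNhd.deriv (fun w _ => hfa w) : AnalyticOnNhd ℂ (deriv f) Set.univ) z (Set.mem_univ z)
  have htanm : ∀ z : ℂ, MeromorphicAt Complex.tan z := by
    intro z
    have h1 : Complex.tan = fun w => Complex.sin w / Complex.cos w :=
      funext fun w => Complex.tan_eq_sin_div_cos w
    rw [h1]
    exact (Complex.differentiable_sin.analyticAt z).meromorphicAt.div
      (Complex.differentiable_cos.analyticAt z).meromorphicAt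
  have hLm : MeromorphicAt (Lfun f) z₀ :=
    (hda z₀).meromorphicAt.div (hfa z₀).meromorphicAt
  have hLim : MeromorphicAt (fun z => Lfun f z - Complex.I) z₀ :=
    hLm.sub (MeromorphicAt.const Complex.I z₀)
  have hTim : MeromorphicAt (fun z => Complex.tan z - Complex.I) z₀ :=
    (htanm z₀).sub (MeromorphicAt.const Complex.I z₀)
  have hTpm : MeromorphicAt (fun z => Complex.tan z + Complex.I) z₀ :=
    (htanm z₀).add (MeromorphicAt.const Complex.I z₀)
  have hSm : MeromorphicAt (fun z => Lfun f z + Complex.tan z) z₀ := hLm.add (htanm z₀)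
  have hFm : MeromorphicAt (Ffun f) z₀ :=
    (((htanm z₀).mul hLm).sub (MeromorphicAt.const 1 z₀)).div hSm
  have hFim : MeromorphicAt (fun z => Ffun f z - Complex.I) z₀ :=
    hFm.sub (MeromorphicAt.const Complex.I z₀)
  rw [merOrder_eq hLim, merOrder_eq hFim]
  set e : ℤ := if Complex.cos z₀ = 0 then -1 else 0 with he_def
  have he0 : e ≤ 0 := by rw [he_def]; split <;> omega
  have hTiord : hTim.order = (e : WithTop ℤ) := by
    have h' : MeromorphicAt (fun z => (1 : ℂ) * Complex.tan z + (-Complex.I)) z₀ :=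
      ((MeromorphicAt.const 1 z₀).mul (htanm z₀)).add (MeromorphicAt.const _ z₀)
    rw [hTim.order_congr' h' (Filter.Eventually.of_forall fun z => by ring)]
    exact tan_lin_order (sin_lin_ne 1 (-Complex.I) one_ne_zero (Or.inr (by ring))) h'
  have hTpord : hTpm.order = (e : WithTop ℤ) := by
    have h' : MeromorphicAt (fun z => (1 : ℂ) * Complex.tan z + Complex.I) z₀ :=
      ((MeromorphicAt.const 1 z₀).mul (htanm z₀)).add (MeromorphicAt.const _ z₀)
    rw [hTpm.order_congr' h' (Filter.Eventually.of_forall fun z => by ring)]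
    exact tan_lin_order (sin_lin_ne 1 Complex.I one_ne_zero (Or.inl (by ring))) h'
  -- the non-real part
  have hnr : hLim.order = ((m : ℤ) : WithTop ℤ) → z₀.im ≠ 0 := by
    intro hc him
    have hz₀ : z₀ = (z₀.re : ℂ) := by
      apply Complex.ext <;> simp [him]
    obtain ⟨g, hg, hgx, hev⟩ := (hLim.order_eq_int_iff (m : ℤ)).mp hc
    have hLtend : Tendsto (Lfun f) (𝓝[≠] z₀) (𝓝 Complex.I) := by
      have hcont : ContinuousAt (fun z => (z - z₀) ^ (m : ℤ) * g z + Complex.I) z₀ := by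
        apply ContinuousAt.add _ continuousAt_const
        apply ContinuousAt.mul _ hg.continuousAt
        have h1 : (fun z : ℂ => (z - z₀) ^ (m : ℤ)) = fun z => (z - z₀) ^ m := by
          funext z; rw [zpow_natCast]
        rw [h1]
        exact ((continuous_id.sub continuous_const).pow m).continuousAt
      have hval : (z₀ - z₀) ^ (m : ℤ) * g z₀ + Complex.I = Complex.I := by
        rw [sub_self, zero_zpow _ (by exact_mod_cast (by omega : m ≠ 0))]
        ring
      have h1 : Tendsto (fun z => (z - z₀) ^ (m : ℤ) * g z + Complex.I) (𝓝 z₀) (𝓝 Complex.I) := by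
        have := hcont.tendsto
        rwa [hval] at this
      apply (h1.mono_left nhdsWithin_le_nhds).congr'
      filter_upwards [hev] with z h0
      rw [smul_eq_mul] at h0
      rw [← h0]; ring
    have hfne : ∃ w, f w ≠ 0 := by
      by_contra h0
      push_neg at h0
      exact htr ⟨0, fun z => by simp [h0 z]⟩
    have hfz : f z₀ ≠ 0 := by
      intro hf0
      have hone : (hfa z₀).order ≠ ⊤ := by
        intro h0
        have heq := AnalyticOnNhd.eqOn_zero_of_preconnected_of_eventuallyEq_zero
          (fun w _ => hfa w) isPreconnected_univ (Set.mem_univ z₀)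
          ((hfa z₀).order_eq_top_iff.mp h0)
        obtain ⟨w, hw⟩ := hfne
        exact hw (heq (Set.mem_univ w))
      obtain ⟨k, hk⟩ := WithTop.ne_top_iff_exists.mp hone
      obtain ⟨u, hu, hux, huev⟩ := ((hfa z₀).order_eq_nat_iff k).mp hk.symm
      have hk0 : k ≠ 0 := by
        intro h0
        apply hux
        have h1 := huev.self_of_nhds
        rw [h0] at h1
        simpa [hf0] using h1.symm
      obtain ⟨j, rfl⟩ : ∃ j, k = j + 1 := ⟨k - 1, by omega⟩
      have hfeq : f =ᶠ[𝓝 z₀] fun z => (z - z₀) ^ (j + 1) * u z := by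
        filter_upwards [huev] with z h0; rw [h0, smul_eq_mul]
      have hud : ∀ᶠ z in 𝓝 z₀, DifferentiableAt ℂ u z :=
        hu.eventually_analyticAt.mono fun z h => h.differentiableAt
      have hderiv : ∀ᶠ z in 𝓝 z₀, deriv f z =
          ((j : ℂ) + 1) * (z - z₀) ^ j * u z + (z - z₀) ^ (j + 1) * deriv u z := by
        filter_upwards [hfeq.deriv, hud] with z h0 h1
        rw [h0]
        have h2 : HasDerivAt (fun w : ℂ => (w - z₀) ^ (j + 1))
            (((j : ℂ) + 1) * (z - z₀) ^ j) z := by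
          have h3 := ((hasDerivAt_id z).sub_const z₀).pow (j + 1)
          simp only [Nat.add_sub_cancel, mul_one, id_eq] at h3
          rw [show ((j : ℂ) + 1) * (z - z₀) ^ j = ↑(j + 1) * (z - z₀) ^ j by push_cast; ring]
          exact h3
        exact (h2.mul h1.hasDerivAt).deriv
      have hucont : ContinuousAt (deriv u) z₀ :=
        ((AnalyticOnNhd.deriv (fun w hw => hw : AnalyticOnNhd ℂ u {w | AnalyticAt ℂ u w}))
          z₀ hu).continuousAt
      have hune : ∀ᶠ z in 𝓝 z₀, u z ≠ 0 := hu.continuousAt.eventually_ne hux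
      have htend1 : Tendsto (fun z => ((j : ℂ) + 1) + (z - z₀) * (deriv u z / u z)) (𝓝 z₀)
          (𝓝 ((j : ℂ) + 1)) := by
        have hc1 : ContinuousAt (fun z => ((j : ℂ) + 1) + (z - z₀) * (deriv u z / u z)) z₀ :=
          continuousAt_const.add ((continuousAt_id.sub continuousAt_const).mul
            (hucont.div hu.continuousAt hux))
        have := hc1.tendsto
        simpa using this
      have hkey : ∀ᶠ z in 𝓝[≠] z₀, (z - z₀) * Lfun f z =
          ((j : ℂ) + 1) + (z - z₀) * (deriv u z / u z) := by
        filter_upwards [hfeq.filter_mono nhdsWithin_le_nhds,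
          hderiv.filter_mono nhdsWithin_le_nhds, hune.filter_mono nhdsWithin_le_nhds,
          self_mem_nhdsWithin] with z h1 h2 h3 h4
        have hzz : z - z₀ ≠ 0 := sub_ne_zero.2 h4
        show (z - z₀) * (deriv f z / f z) = _
        rw [h1, h2]
        field_simp
        ring
      have htend0 : Tendsto (fun z => (z - z₀) * Lfun f z) (𝓝[≠] z₀) (𝓝 0) := by
        have h0 : Tendsto (fun z : ℂ => z - z₀) (𝓝[≠] z₀) (𝓝 0) := by
          have h0' : ContinuousAt (fun z : ℂ => z - z₀) z₀ :=
            (continuous_id.sub continuous_const).continuousAt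
          have := h0'.tendsto.mono_left (nhdsWithin_le_nhds (s := {z₀}ᶜ))
          simpa using this
        simpa using h0.mul hLtend
      have hcontr : (0 : ℂ) = (j : ℂ) + 1 :=
        tendsto_nhds_unique (Filter.Tendsto.congr' hkey htend0)
          (htend1.mono_left nhdsWithin_le_nhds)
      have : ((j : ℂ) + 1) = 0 := hcontr.symm
      have h9 : (j + 1 : ℕ) = 0 := by exact_mod_cast this
      omega
    have hLcont : ContinuousAt (Lfun f) z₀ :=
      (hda z₀).continuousAt.div (hfa z₀).continuousAt hfz
    have hLz : Lfun f z₀ = Complex.I :=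
      tendsto_nhds_unique (hLcont.tendsto.mono_left nhdsWithin_le_nhds) hLtend
    have him0 : (Lfun f z₀).im = 0 := by
      show (deriv f z₀ / f z₀).im = 0
      rw [hz₀, Complex.div_im, realEntire_deriv_im hre.1 hre.2 z₀.re, hre.2 z₀.re]
      simp
    rw [hLz] at him0
    simp at him0
  refine ⟨?_, hnr⟩
  by_cases hStop : hSm.order = ⊤
  -- Case A : L + T vanishes identically near z₀
  · have hz : ∀ᶠ z in 𝓝[≠] z₀, Lfun f z + Complex.tan z = 0 := hSm.order_eq_top_iff.mp hStop
    have hLord : hLim.order = (e : WithTop ℤ) := by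
      have h' : MeromorphicAt (fun z => (-1 : ℂ) * Complex.tan z + (-Complex.I)) z₀ :=
        ((MeromorphicAt.const (-1) z₀).mul (htanm z₀)).add (MeromorphicAt.const _ z₀)
      rw [hLim.order_congr' h' ?_]
      · exact tan_lin_order (sin_lin_ne (-1) (-Complex.I) (by norm_num) (Or.inl (by ring))) h'
      · filter_upwards [hz] with z h0
        have h1 : Lfun f z = -Complex.tan z := by linear_combination h0
        rw [h1]; ring
    have hFord : hFim.order = ((0 : ℤ) : WithTop ℤ) := by
      have hcm : MeromorphicAt (fun _ : ℂ => -Complex.I) z₀ := MeromorphicAt.const _ z₀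
      rw [hFim.order_congr' hcm ?_]
      · rw [hcm.order_eq_int_iff]
        exact ⟨fun _ => -Complex.I, analyticAt_const, neg_ne_zero.2 Complex.I_ne_zero,
          Filter.Eventually.of_forall fun z => by simp⟩
      · filter_upwards [hz] with z h0
        show Ffun f z - Complex.I = -Complex.I
        simp only [Ffun]
        rw [h0, div_zero, zero_sub]
    constructor
    · intro hc
      rw [hLord] at hc
      have : e = (m : ℤ) := by exact_mod_cast hc
      omega
    · intro hc
      rw [hFord] at hc
      have : (0 : ℤ) = (m : ℤ) := by exact_mod_cast hc
      omega
  -- Case B : L + T not identically zero near z₀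
  · obtain ⟨s, hs⟩ := WithTop.ne_top_iff_exists.mp hStop
    have hSne : ∀ᶠ z in 𝓝[≠] z₀, Lfun f z + Complex.tan z ≠ 0 := hSm.eventually_ne_zero' hStop
    have hkey : ∀ᶠ z in 𝓝[≠] z₀,
        ((fun z => Ffun f z - Complex.I) * fun z => Lfun f z + Complex.tan z) z =
        ((fun z => Complex.tan z - Complex.I) * fun z => Lfun f z - Complex.I) z := by
      filter_upwards [hSne] with z h0
      simp only [Pi.mul_apply, Ffun]
      field_simp
      linear_combination -Complex.I_sq
    have hmul : hFim.order + hSm.order = hTim.order + hLim.order := by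
      calc hFim.order + hSm.order = (hFim.mul hSm).order := (hFim.order_mul' hSm).symm
        _ = (hTim.mul hLim).order := (hFim.mul hSm).order_congr' (hTim.mul hLim) hkey
        _ = hTim.order + hLim.order := hTim.order_mul' hLim
    have key2 : ∀ p : ℤ, hLim.order = (p : WithTop ℤ) → 1 ≤ p →
        hFim.order = (p : WithTop ℤ) := by
      intro p hp hp1
      have hSe : hSm.order = (e : WithTop ℤ) := by
        have h1 : hSm.order = (hTpm.add hLim).order :=
          hSm.order_congr' (hTpm.add hLim)
            (Filter.Eventually.of_forall fun z => by simp only [Pi.add_apply]; ring)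
        rw [h1]
        apply hTpm.order_add_eq_left hLim e hTpord
        rw [hp]
        exact_mod_cast WithTop.coe_lt_coe.mpr (by omega)
      have h2 := hmul
      rw [hSe, hp, hTiord] at h2
      have h3 : hFim.order + (e : WithTop ℤ) = (p : WithTop ℤ) + (e : WithTop ℤ) := by
        rw [h2, add_comm]
      exact WithTop.add_right_cancel WithTop.coe_ne_top h3
    have key3 : ∀ p : ℤ, hLim.order = (p : WithTop ℤ) → p ≤ 0 →
        ∃ q : ℤ, hFim.order = (q : WithTop ℤ) ∧ q ≤ 0 := by
      intro p hp hp0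
      have hmin : ((min p e : ℤ) : WithTop ℤ) ≤ hSm.order := by
        have h1 : hSm.order = (hLim.add hTpm).order :=
          hSm.order_congr' (hLim.add hTpm)
            (Filter.Eventually.of_forall fun z => by simp only [Pi.add_apply]; ring)
        rw [h1]
        apply hLim.order_add_ge' hTpm
        · rw [hp]; exact_mod_cast min_le_left p e
        · rw [hTpord]; exact_mod_cast min_le_right p e
      have hsmin : min p e ≤ s := by
        rw [← hs] at hmin; exact_mod_cast hmin
      have h2 := hmul
      rw [← hs, hp, hTiord] at h2
      have hne : hFim.order ≠ ⊤ := by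
        intro h0
        rw [h0, top_add] at h2
        exact (WithTop.coe_ne_top (a := e + p)) (by exact_mod_cast h2.symm)
      obtain ⟨q, hq⟩ := WithTop.ne_top_iff_exists.mp hne
      refine ⟨q, hq.symm, ?_⟩
      rw [← hq] at h2
      have h4 : q + s = e + p := by exact_mod_cast h2
      omega
    have keyT : hLim.order = ⊤ → hFim.order = ⊤ := by
      intro hp
      have h2 := hmul
      rw [← hs, hp, hTiord, add_top] at h2
      by_contra h0
      obtain ⟨q, hq⟩ := WithTop.ne_top_iff_exists.mp h0
      rw [← hq] at h2
      exact (WithTop.coe_ne_top (a := q + s)) (by exact_mod_cast h2)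
    constructor
    · intro hc
      exact key2 (m : ℤ) hc (by exact_mod_cast hm)
    · intro hc
      rcases eq_or_ne hLim.order ⊤ with h0 | h0
      · rw [keyT h0] at hc
        exact absurd hc.symm (WithTop.coe_ne_top)
      · obtain ⟨p, hp⟩ := WithTop.ne_top_iff_exists.mp h0
        rcases le_or_gt p 0 with hp0 | hp0
        · obtain ⟨q, hq, hq0⟩ := key3 p hp.symm hp0
          rw [hq] at hc
          have : q = (m : ℤ) := by exact_mod_cast hc
          omega
        · have h1 := key2 p hp.symm hp0
          rw [h1] at hc
          have h2 : p = (m : ℤ) := by exact_mod_cast hc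
          rw [← hp, h2]

end
end

section
/- Let f be a real transcendental entire function, L = f′/f, T(z) = tan z, F = (T·L − 1)/(L + T), and for a ∈ ℂ ∖ ℝ set s_a = T·(F − a)/(T − F). Then s_a satisfies the identity s_a(z) = (sin²z − a·cos z·sin z)·L(z) − cos z·sin z − a·sin²z as meromorphic functions on ℂ. Moreover, if f and f″ + f each have only finitely many non-real zeros, then s_a has only finitely many poles in the open upper half-plane H. -/
open Complex Set Filter MeasureTheory Topology
open scoped ENNReal

noncomputable section

private theorem keyid15 (s c l a : ℂ) (hc : c ≠ 0) (hd : l + s / c ≠ 0)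
    (hsc : s ^ 2 + c ^ 2 = 1) :
    (s / c) * ((s / c * l - 1) / (l + s / c) - a) / (s / c - (s / c * l - 1) / (l + s / c)) =
      (s ^ 2 - a * c * s) * l - c * s - a * s ^ 2 := by
  have hD : c * l + s ≠ 0 := by
    intro h
    apply hd
    field_simp
    linear_combination h
  have hF : (s / c * l - 1) / (l + s / c) = (s * l - c) / (c * l + s) := by
    rw [div_eq_div_iff hd hD]
    field_simp
  have h2 : s / c - (s * l - c) / (c * l + s) = 1 / (c * (c * l + s)) := by
    rw [div_sub_div _ _ hc hD, div_eq_div_iff (mul_ne_zero hc hD) (mul_ne_zero hc hD)]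
    ring_nf
    linear_combination (c * s + c ^ 2 * l) * hsc
  rw [hF, h2, div_div_eq_mul_div, div_one]
  field_simp
  ring

private lemma merOrderCongr15 {g h : ℂ → ℂ} {x : ℂ} (hg : MeromorphicAt g x)
    (hh : MeromorphicAt h x) (he : g =ᶠ[𝓝[≠] x] h) :
    meromorphicOrderAt g x = meromorphicOrderAt h x := by
  exact meromorphicOrderAt_congr he

private lemma orderNonneg15 {g G : ℂ → ℂ} {x : ℂ} (hm : MeromorphicAt g x)
    (hG : AnalyticAt ℂ G x) (he : g =ᶠ[𝓝[≠] x] G) : 0 ≤ meromorphicOrderAt g x := by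
  rw [merOrderCongr15 hm hG.meromorphicAt he]
  exact hG.meromorphicOrderAt_nonneg

theorem stmt15 (f : ℂ → ℂ) (hre : RealEntire f) (htr : TranscendentalFun f)
    (a : ℂ) (ha : a.im ≠ 0) :
    (∀ z : ℂ, Complex.cos z ≠ 0 → f z ≠ 0 → Lfun f z + Complex.tan z ≠ 0 →
      sfun f a z = (Complex.sin z ^ 2 - a * Complex.cos z * Complex.sin z) * Lfun f z -
        Complex.cos z * Complex.sin z - a * Complex.sin z ^ 2) ∧
    (FinitelyManyNonRealZeros f →
      FinitelyManyNonRealZeros (fun z => deriv (deriv f) z + f z) →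
      {z : ℂ | 0 < z.im ∧ IsPoleAt (sfun f a) z}.Finite) := by
  have key : ∀ z : ℂ, Complex.cos z ≠ 0 → f z ≠ 0 → Lfun f z + Complex.tan z ≠ 0 →
      sfun f a z = (Complex.sin z ^ 2 - a * Complex.cos z * Complex.sin z) * Lfun f z -
        Complex.cos z * Complex.sin z - a * Complex.sin z ^ 2 := by
    intro z hc _ hd
    rw [Complex.tan_eq_sin_div_cos] at hd
    simp only [sfun, Ffun, Complex.tan_eq_sin_div_cos]
    exact keyid15 (Complex.sin z) (Complex.cos z) (Lfun f z) a hc hd (Complex.sin_sq_add_cos_sq z)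
  refine ⟨key, ?_⟩
  intro hffin _
  apply hffin.subset
  rintro z₀ ⟨him, hmer, hord⟩
  have him' : z₀.im ≠ 0 := ne_of_gt him
  refine ⟨him', ?_⟩
  by_contra hfz
  have hord' : meromorphicOrderAt (sfun f a) z₀ < 0 := by
    unfold merOrder at hord
    rwa [dif_pos hmer] at hord
  have hcos : Complex.cos z₀ ≠ 0 := by
    intro h
    obtain ⟨k, hk⟩ := Complex.cos_eq_zero_iff.mp h
    apply him'
    rw [hk]
    simp
  have hsin : Complex.sin z₀ ≠ 0 := by
    intro h
    obtain ⟨k, hk⟩ := Complex.sin_eq_zero_iff.mp h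
    apply him'
    rw [hk]
    simp
  have hdf := hre.1
  have hAf : AnalyticAt ℂ f z₀ := hdf.analyticAt z₀
  have hAf' : AnalyticAt ℂ (deriv f) z₀ :=
    AnalyticOnNhd.deriv (fun z _ => hdf.analyticAt z) z₀ (Set.mem_univ z₀)
  have hAsin : AnalyticAt ℂ Complex.sin z₀ := Complex.differentiable_sin.analyticAt z₀
  have hAcos : AnalyticAt ℂ Complex.cos z₀ := Complex.differentiable_cos.analyticAt z₀
  have hAh : AnalyticAt ℂ (fun z => Complex.cos z * deriv f z + Complex.sin z * f z) z₀ :=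
    (hAcos.mul hAf').add (hAsin.mul hAf)
  have hfne : ∀ᶠ z in 𝓝 z₀, f z ≠ 0 := hdf.continuous.continuousAt.eventually_ne hfz
  have hcne : ∀ᶠ z in 𝓝 z₀, Complex.cos z ≠ 0 :=
    Complex.continuous_cos.continuousAt.eventually_ne hcos
  have hsne : ∀ᶠ z in 𝓝 z₀, Complex.sin z ≠ 0 :=
    Complex.continuous_sin.continuousAt.eventually_ne hsin
  rcases hAh.eventually_eq_zero_or_eventually_ne_zero with hcase | hcase
  · have hev : sfun f a =ᶠ[𝓝 z₀] fun _ => -a := by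
      filter_upwards [hfne, hcne, hsne, hcase] with z hf0 hc hs hz0
      have hz0' : Complex.cos z * deriv f z + Complex.sin z * f z = 0 := hz0
      have htan : Complex.tan z ≠ 0 := by
        rw [Complex.tan_eq_sin_div_cos]; exact div_ne_zero hs hc
      have hden0 : Lfun f z + Complex.tan z = 0 := by
        rw [Complex.tan_eq_sin_div_cos]
        show deriv f z / f z + Complex.sin z / Complex.cos z = 0
        rw [div_add_div _ _ hf0 hc, div_eq_zero_iff]
        left
        linear_combination hz0'
      show sfun f a z = -a
      simp only [sfun, Ffun, hden0, div_zero, zero_sub, sub_zero]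
      rw [mul_comm, mul_div_assoc, div_self htan, mul_one]
    have hle := orderNonneg15 hmer analyticAt_const (hev.filter_mono nhdsWithin_le_nhds)
    exact absurd hord' (not_lt.mpr hle)
  · have hev : sfun f a =ᶠ[𝓝[≠] z₀] fun z =>
        (Complex.sin z ^ 2 - a * Complex.cos z * Complex.sin z) * Lfun f z -
          Complex.cos z * Complex.sin z - a * Complex.sin z ^ 2 := by
      filter_upwards [hfne.filter_mono nhdsWithin_le_nhds,
        hcne.filter_mono nhdsWithin_le_nhds, hcase] with z hf0 hc hz0
      have hden : Lfun f z + Complex.tan z ≠ 0 := by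
        intro h0
        apply hz0
        show Complex.cos z * deriv f z + Complex.sin z * f z = 0
        rw [Complex.tan_eq_sin_div_cos] at h0
        have h1 : (deriv f z / f z + Complex.sin z / Complex.cos z) * (f z * Complex.cos z)
            = 0 := by
          have h2 : Lfun f z = deriv f z / f z := rfl
          rw [← h2, h0, zero_mul]
        field_simp at h1
        linear_combination h1
      exact key z hc hf0 hden
    have hG : AnalyticAt ℂ (fun z =>
        (Complex.sin z ^ 2 - a * Complex.cos z * Complex.sin z) * Lfun f z -
          Complex.cos z * Complex.sin z - a * Complex.sin z ^ 2) z₀ := by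
      have hL : AnalyticAt ℂ (Lfun f) z₀ := hAf'.div hAf hfz
      exact (((((hAsin.pow 2).sub ((analyticAt_const.mul hAcos).mul hAsin)).mul hL).sub
        (hAcos.mul hAsin)).sub (analyticAt_const.mul (hAsin.pow 2)))
    have hle := orderNonneg15 hmer hG hev
    exact absurd hord' (not_lt.mpr hle)

end
end

section
/- Let f be a real transcendental entire function, L = f′/f, T(z) = tan z, F = (T·L − 1)/(L + T), and for non-real a let s_a = T·(F − a)/(T − F). Let a and b be distinct non-real complex numbers and let Q > 0. Then there exists η₀ > 0 such that for every z ∈ ℂ at which tan z, cot z, s_a(z) and s_b(z) are all finite and |s_a(z)| + |s_b(z)| ≤ η₀, one has max{|tan z|, |cot z|} ≥ Q. -/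
open Complex Set Filter MeasureTheory Topology
open scoped ENNReal

noncomputable section

theorem stmt16 (f : ℂ → ℂ) (hre : RealEntire f) (htr : TranscendentalFun f)
    (a b : ℂ) (ha : a.im ≠ 0) (hb : b.im ≠ 0) (hab : a ≠ b) (Q : ℝ) (hQ : 0 < Q) :
    ∃ η₀ : ℝ, 0 < η₀ ∧
      ∀ z : ℂ, Complex.cos z ≠ 0 → Complex.sin z ≠ 0 → f z ≠ 0 →
        Lfun f z + Complex.tan z ≠ 0 →
        ‖sfun f a z‖ + ‖sfun f b z‖ ≤ η₀ →
        Q ≤ max ‖Complex.tan z‖ ‖Complex.cot z‖ := by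
  classical
  set M := max (‖a‖) (‖b‖) with hM
  have hM0 : (0:ℝ) ≤ M := le_trans (norm_nonneg a) (le_max_left _ _)
  have habs : 0 < ‖a - b‖ := norm_pos_iff.mpr (sub_ne_zero.mpr hab)
  have hden : (0:ℝ) < Q * (M + Q) + 1 := by positivity
  refine ⟨‖a - b‖ / (Q * (M + Q) + 1), div_pos habs hden, ?_⟩
  intro z hcos hsin hf hLT hs
  set T := Complex.tan z with hT
  set L := Lfun f z with hL
  have hTs : T = Complex.sin z / Complex.cos z := Complex.tan_eq_sin_div_cos z
  have hTne : T ≠ 0 := by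
    rw [hTs]; exact div_ne_zero hsin hcos
  have hFdef : Ffun f z = (T * L - 1) / (L + T) := rfl
  have hTF : T - Ffun f z ≠ 0 := by
    intro h
    have hEF : T = (T * L - 1) / (L + T) := by
      have := sub_eq_zero.mp h; rw [← hFdef]; exact this
    have h1 : T * (L + T) = T * L - 1 := by
      rw [eq_div_iff hLT] at hEF; exact hEF
    have h2 : T * T = -1 := by linear_combination h1
    rw [hTs] at h2
    rw [div_mul_div_comm] at h2
    have h3 : Complex.sin z * Complex.sin z = -1 * (Complex.cos z * Complex.cos z) :=
      (div_eq_iff (mul_ne_zero hcos hcos)).mp h2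
    have h4 := Complex.sin_sq_add_cos_sq z
    have h5 : (0:ℂ) = 1 := by linear_combination h4 - h3
    exact one_ne_zero h5.symm
  -- key algebraic identity
  have hid : T * (b - a) = a * sfun f b z - b * sfun f a z
      + T * (sfun f a z - sfun f b z) := by
    show T * (b - a) = a * (T * (Ffun f z - b) / (T - Ffun f z))
      - b * (T * (Ffun f z - a) / (T - Ffun f z))
      + T * (T * (Ffun f z - a) / (T - Ffun f z) - T * (Ffun f z - b) / (T - Ffun f z))
    field_simp
    ring
  have hbd : ‖T‖ * ‖a - b‖
      ≤ (‖sfun f a z‖ + ‖sfun f b z‖) * (M + ‖T‖) := by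
    have h1 : ‖T‖ * ‖a - b‖ = ‖T * (b - a)‖ := by
      rw [norm_mul, norm_sub_rev a b]
    rw [h1, hid]
    have h2 : ‖a * sfun f b z - b * sfun f a z
        + T * (sfun f a z - sfun f b z)‖
        ≤ ‖a‖ * ‖sfun f b z‖
          + ‖b‖ * ‖sfun f a z‖
          + ‖T‖ * (‖sfun f a z‖ + ‖sfun f b z‖) := by
      have e1 : a * sfun f b z - b * sfun f a z + T * (sfun f a z - sfun f b z)
          = a * sfun f b z + -(b * sfun f a z)
            + (T * sfun f a z + -(T * sfun f b z)) := by ring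
      rw [e1]
      calc ‖a * sfun f b z + -(b * sfun f a z)
              + (T * sfun f a z + -(T * sfun f b z))‖
          ≤ ‖a * sfun f b z + -(b * sfun f a z)‖
            + ‖T * sfun f a z + -(T * sfun f b z)‖ := norm_add_le _ _
        _ ≤ (‖a * sfun f b z‖ + ‖-(b * sfun f a z)‖)
            + (‖T * sfun f a z‖ + ‖-(T * sfun f b z)‖) :=
            add_le_add (norm_add_le _ _) (norm_add_le _ _)
        _ = ‖a‖ * ‖sfun f b z‖
            + ‖b‖ * ‖sfun f a z‖
            + ‖T‖ * (‖sfun f a z‖ + ‖sfun f b z‖) := by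
            simp only [norm_neg, norm_mul]; ring
    refine h2.trans ?_
    have hA : ‖a‖ ≤ M := le_max_left _ _
    have hB : ‖b‖ ≤ M := le_max_right _ _
    nlinarith [norm_nonneg (sfun f a z), norm_nonneg (sfun f b z),
      norm_nonneg T]
  rcases le_or_gt Q (‖T‖) with h | h
  · exact le_trans h (le_max_left _ _)
  · -- |T| < Q; show Q ≤ |cot z|
    have hTpos : 0 < ‖T‖ := norm_pos_iff.mpr hTne
    have hsnn : 0 ≤ ‖sfun f a z‖ + ‖sfun f b z‖ := by positivity
    -- From hbd and hs: |T| * |a-b| ≤ η₀ * (M + Q)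
    have key : ‖T‖ * ‖a - b‖
        ≤ (‖a - b‖ / (Q * (M + Q) + 1)) * (M + Q) := by
      refine hbd.trans ?_
      have hMT : (0:ℝ) < M + ‖T‖ := by positivity
      calc (‖sfun f a z‖ + ‖sfun f b z‖) * (M + ‖T‖)
          ≤ (‖a - b‖ / (Q * (M + Q) + 1)) * (M + ‖T‖) := by
            gcongr
        _ ≤ (‖a - b‖ / (Q * (M + Q) + 1)) * (M + Q) := by
            have : (0:ℝ) ≤ ‖a - b‖ / (Q * (M + Q) + 1) :=
              le_of_lt (div_pos habs hden)
            gcongr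
    have hQT : Q * ‖T‖ < 1 := by
      rw [div_mul_eq_mul_div] at key
      have key2 : ‖T‖ * ‖a - b‖ * (Q * (M + Q) + 1)
          ≤ ‖a - b‖ * (M + Q) := (le_div_iff₀ hden).mp key
      have h2 : ‖T‖ * (Q * (M + Q) + 1) * ‖a - b‖
          ≤ (M + Q) * ‖a - b‖ := by nlinarith [key2]
      have h1 : ‖T‖ * (Q * (M + Q) + 1) ≤ M + Q :=
        le_of_mul_le_mul_right h2 habs
      nlinarith [hTpos, hM0, hQ]
    have hcot : ‖Complex.cot z‖ = (‖T‖)⁻¹ := by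
      rw [Complex.cot_eq_cos_div_sin, norm_div, hTs, norm_div]
      rw [inv_div]
    have hfin : Q < (‖T‖)⁻¹ := by
      rw [← one_div, lt_div_iff₀ hTpos]; exact hQT
    have : Q ≤ ‖Complex.cot z‖ := by rw [hcot]; exact hfin.le
    exact this.trans (le_max_right _ _)

end
end
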